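/- Let R be a noetherian F-finite normal integral domain of prime characteristic p and let 𝔭 ⊆ R be a prime ideal of height 1. If R is purely F-regular along 𝔭, then both R and the quotient domain R/𝔭 are strongly F-regular. -/

import Mathlib

/-- `φ` is a `p^e`-linear map: an additive map with `φ (a^(p^e) * b) = a * φ b`. -/
def IsPLinearMap (p e : ℕ) {R : Type*} [CommRing R] (φ : R →+ R) : Prop :=
  ∀ a b : R, φ (a ^ p ^ e * b) = a * φ b

/-- `R` is purely `F`-regular along the ideal `q`: for every `c ∉ q` there are `e ≥ 1` and a
`p^e`-linear map `φ` with `φ q ⊆ q` and `φ c = 1`. -/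
def PurelyFRegularAlong (p : ℕ) {R : Type*} [CommRing R] (q : Ideal R) : Prop :=
  ∀ c : R, c ∉ q → ∃ e : ℕ, 1 ≤ e ∧ ∃ φ : R →+ R,
    IsPLinearMap p e φ ∧ (∀ x ∈ q, φ x ∈ q) ∧ φ c = 1

/-- `R` is F-finite: `R` is a finitely generated module over its subring of `p`-th powers,
i.e. there is a finite set spanning `R` with coefficients that are `p`-th powers. -/
def FFinite (p : ℕ) (R : Type*) [CommRing R] : Prop :=
  ∃ s : Finset R, ∀ x : R, ∃ c : R → R, x = ∑ y ∈ s, (c y) ^ p * y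

/-- A prime ideal of height one: a nonzero prime admitting no prime strictly between it and
the zero ideal. -/
def IsHeightOnePrime {R : Type*} [CommRing R] (𝔭 : Ideal R) : Prop :=
  𝔭.IsPrime ∧ 𝔭 ≠ ⊥ ∧ ∀ q : Ideal R, q.IsPrime → q < 𝔭 → q = ⊥

/-- A ring of characteristic `p` is strongly F-regular if every nonzero element is sent
to `1` by some `p^e`-linear map. -/
def StronglyFRegular (p : ℕ) (R : Type*) [CommRing R] : Prop :=
  ∀ c : R, c ≠ 0 → ∃ e : ℕ, 1 ≤ e ∧ ∃ φ : R →+ R, IsPLinearMap p e φ ∧ φ c = 1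

lemma ffinite_pow {p : ℕ} {R : Type*} [CommRing R] (hp : p.Prime) [CharP R p]
    (hff : FFinite p R) (e : ℕ) :
    ∃ s : Finset R, ∀ x : R, ∃ c : R → R, x = ∑ y ∈ s, (c y) ^ p ^ e * y := by
  classical
  haveI : Fact p.Prime := ⟨hp⟩
  induction e with
  | zero => exact ⟨{1}, fun x => ⟨fun _ => x, by simp⟩⟩
  | succ e ih =>
    obtain ⟨s, hs⟩ := ih
    obtain ⟨s1, hs1⟩ := hff
    refine ⟨(s1 ×ˢ s).image (fun q => q.2 ^ p * q.1), fun x => ?_⟩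
    obtain ⟨a, ha⟩ := hs1 x
    choose b hb using fun y => hs (a y)
    refine ⟨fun w => ∑ q ∈ (s1 ×ˢ s).filter (fun q => q.2 ^ p * q.1 = w), b q.1 q.2, ?_⟩
    have expand : x = ∑ q ∈ s1 ×ˢ s, b q.1 q.2 ^ p ^ (e + 1) * (q.2 ^ p * q.1) := by
      rw [ha, Finset.sum_product]
      refine Finset.sum_congr rfl fun y hy => ?_
      rw [hb y, sum_pow_char, Finset.sum_mul]
      refine Finset.sum_congr rfl fun z hz => ?_
      ring
    have fib := Finset.sum_fiberwise_of_maps_to (s := s1 ×ˢ s)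
      (t := (s1 ×ˢ s).image fun q => q.2 ^ p * q.1) (g := fun q => q.2 ^ p * q.1)
      (fun q hq => Finset.mem_image_of_mem _ hq)
      (fun q => b q.1 q.2 ^ p ^ (e + 1) * (q.2 ^ p * q.1))
    rw [expand, ← fib]
    refine Finset.sum_congr rfl fun w hw => ?_
    rw [sum_pow_char_pow, Finset.sum_mul]
    refine Finset.sum_congr rfl fun q hq => ?_
    rw [(Finset.mem_filter.mp hq).2]

lemma ffinite_localization {p : ℕ} {R : Type*} [CommRing R] [IsDomain R] (hp : p.Prime)
    (hff : FFinite p R) (𝔭 : Ideal R) [𝔭.IsPrime] : FFinite p (Localization.AtPrime 𝔭) := by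
  classical
  obtain ⟨s, hs⟩ := hff
  set A := Localization.AtPrime 𝔭 with hA
  let f : R →+* A := algebraMap R A
  have finj : Function.Injective f :=
    IsLocalization.injective A 𝔭.primeCompl_le_nonZeroDivisors
  refine ⟨s.image f, fun z => ?_⟩
  obtain ⟨⟨x, u⟩, hxu⟩ := IsLocalization.surj 𝔭.primeCompl z
  have hu : IsUnit (f u) := IsLocalization.map_units A u
  set v : A := ↑hu.unit⁻¹ with hv
  have hvu : v * f u = 1 := by rw [hv]; exact Units.inv_mul _
  obtain ⟨c, hc⟩ := hs (x * (u : R) ^ (p - 1))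
  refine ⟨fun w => v * f (c (Function.invFun f w)), ?_⟩
  have hz : z = f (x * (u : R) ^ (p - 1)) * v ^ p := by
    have h1 : z = f x * v := by
      rw [← hxu, mul_assoc, mul_comm (f ↑u) v, hvu, mul_one]
    have hvp : v ^ p = v ^ (p - 1) * v := by
      rw [← pow_succ, Nat.sub_add_cancel hp.one_le]
    rw [map_mul, map_pow, hvp,
      show f x * f ↑u ^ (p - 1) * (v ^ (p - 1) * v) = f x * ((v * f ↑u) ^ (p - 1) * v) from by
        ring,
      hvu, one_pow, one_mul, ← h1]
  rw [Finset.sum_image (fun a _ b _ hab => finj hab)]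
  rw [hz, hc, map_sum, Finset.sum_mul]
  refine Finset.sum_congr rfl fun y hy => ?_
  dsimp only
  rw [Function.leftInverse_invFun finj y, map_mul, map_pow]
  ring

/-- Type synonym: `A` viewed as a module over itself via the `e`-th iterate of Frobenius. -/
def Frob (A : Type*) (p e : ℕ) : Type _ := A

namespace Frob

variable {A : Type*} [CommRing A] {p e : ℕ}

instance : AddCommGroup (Frob A p e) := inferInstanceAs (AddCommGroup A)

/-- The identity map `A → Frob A p e`. -/
def of : A → Frob A p e := id

/-- The identity map `Frob A p e → A`. -/
def toA : Frob A p e → A := id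

noncomputable instance [ExpChar A p] : Module A (Frob A p e) :=
  Module.compHom A (iterateFrobenius A p e)

lemma smul_def [ExpChar A p] (a : A) (x : Frob A p e) : a • x = of (a ^ p ^ e * toA x) := rfl

end Frob

lemma exists_pLinear_escape {p : ℕ} {R : Type*} [CommRing R] [IsDomain R] [IsNoetherianRing R]
    [IsIntegrallyClosed R] (hp : p.Prime) [CharP R p] (hff : FFinite p R)
    (𝔭 : Ideal R) (h𝔭 : IsHeightOnePrime 𝔭) (c : R) (hc : c ≠ 0) :
    ∃ e : ℕ, ∃ ψ : R →+ R, IsPLinearMap p e ψ ∧ ψ c ∉ 𝔭 := by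
  classical
  haveI hpr : 𝔭.IsPrime := h𝔭.1
  haveI : Fact p.Prime := ⟨hp⟩
  set A := Localization.AtPrime 𝔭 with hA
  let f : R →+* A := algebraMap R A
  have finj : Function.Injective f :=
    IsLocalization.injective A 𝔭.primeCompl_le_nonZeroDivisors
  haveI : IsDomain A := IsLocalization.isDomain_of_local_atPrime hpr
  haveI : IsNoetherianRing A := IsLocalization.isNoetherianRing 𝔭.primeCompl A inferInstance
  haveI : CharP A p := charP_of_injective_ringHom finj p
  haveI : IsIntegrallyClosed A :=
    isIntegrallyClosed_of_isLocalization (S := A) 𝔭.primeCompl 𝔭.primeCompl_le_nonZeroDivisors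
  -- the maximal ideal is nonzero
  obtain ⟨t, ht𝔭, ht0⟩ := Submodule.ne_bot_iff 𝔭 |>.mp h𝔭.2.1
  have hmem : f t ∈ IsLocalRing.maximalIdeal A := by
    have h1 : t ∈ Ideal.comap (algebraMap R (Localization.AtPrime 𝔭))
        (IsLocalRing.maximalIdeal (Localization 𝔭.primeCompl)) := by
      show t ∈ (IsLocalRing.maximalIdeal (Localization 𝔭.primeCompl)).under R
      rw [Localization.AtPrime.under_maximalIdeal]; exact ht𝔭
    exact h1
  have hmaxne : IsLocalRing.maximalIdeal A ≠ ⊥ := by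
    intro hbot
    rw [hbot] at hmem
    exact ht0 (finj (by simpa using hmem))
  have hnf : ¬IsField A := fun hf => hmaxne (IsLocalRing.isField_iff_maximalIdeal_eq.mp hf)
  -- unique nonzero prime ideal
  have huniq : ∀ P : Ideal A, P ≠ ⊥ ∧ P.IsPrime → P = IsLocalRing.maximalIdeal A := by
    rintro P ⟨hP0, hPp⟩
    have hcom : (P.comap f).IsPrime := hPp.comap f
    have hle : P.comap f ≤ 𝔭 := by
      intro x hx
      by_contra hx𝔭
      have hux : IsUnit (f x) := IsLocalization.map_units (M := 𝔭.primeCompl) A ⟨x, hx𝔭⟩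
      exact hPp.ne_top (P.eq_top_of_isUnit_mem hx hux)
    have hcomeq : P.comap f = 𝔭 := by
      rcases eq_or_lt_of_le hle with heq | hlt
      · exact heq
      · exfalso
        have hb : P.comap f = ⊥ := h𝔭.2.2 _ hcom hlt
        apply hP0
        refine le_antisymm (fun z hz => ?_) bot_le
        obtain ⟨⟨x, u⟩, hxu⟩ := IsLocalization.surj 𝔭.primeCompl z
        have hx : x ∈ P.comap f := by
          rw [Ideal.mem_comap]
          exact hxu ▸ P.mul_mem_right _ hz
        rw [hb] at hx
        have hx0 : x = 0 := hx
        rw [hx0, map_zero] at hxu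
        have hu : IsUnit (f u) := IsLocalization.map_units A u
        exact hu.mul_left_eq_zero.mp hxu
    calc P = Ideal.map f (P.comap f) := (IsLocalization.map_comap 𝔭.primeCompl A P).symm
    _ = Ideal.map f ((IsLocalRing.maximalIdeal A).comap f) := by
        rw [hcomeq]; exact congrArg _ (Localization.AtPrime.under_maximalIdeal (I := 𝔭)).symm
    _ = IsLocalRing.maximalIdeal A := IsLocalization.map_comap 𝔭.primeCompl A _
  haveI hdvr : IsDiscreteValuationRing A := by
    have htfae := IsDiscreteValuationRing.TFAE A hnf
    have h30 := htfae.out 3 0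
    exact h30.mp ⟨inferInstance, ⟨IsLocalRing.maximalIdeal A, ⟨hmaxne, inferInstance⟩, huniq⟩⟩
  haveI : IsPrincipalIdealRing A := hdvr.toIsPrincipalIdealRing
  -- choose e with f c ∉ 𝔪 ^ (p ^ e)
  have hc' : f c ≠ 0 := fun h0 => hc (finj (by rw [h0, map_zero]))
  obtain ⟨N, hN⟩ : ∃ N : ℕ, f c ∉ IsLocalRing.maximalIdeal A ^ N := by
    by_contra hall
    push_neg at hall
    apply hc'
    have hKrull := Ideal.iInf_pow_eq_bot_of_isLocalRing (IsLocalRing.maximalIdeal A)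
      (IsLocalRing.maximalIdeal.isMaximal A).ne_top
    have : f c ∈ (⊥ : Ideal A) := hKrull ▸ (Submodule.mem_iInf _).mpr hall
    simpa using this
  set e := N with he
  have hpe : N ≤ p ^ e := le_of_lt (Nat.lt_pow_self (n := N) hp.one_lt)
  haveI : ExpChar A p := ExpChar.prime hp
  -- module structure
  haveI : NoZeroSMulDivisors A (Frob A p e) := by
    refine ⟨fun {a x} hax => ?_⟩
    have hax' : a ^ p ^ e * Frob.toA x = 0 := hax
    rcases mul_eq_zero.mp hax' with h0 | h0
    · exact Or.inl (pow_eq_zero_iff (pow_ne_zero e hp.ne_zero) |>.mp h0)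
    · exact Or.inr h0
  haveI : Module.Finite A (Frob A p e) := by
    obtain ⟨sA, hsA⟩ := ffinite_pow hp (ffinite_localization hp hff 𝔭) e
    refine ⟨⟨sA.image Frob.of, eq_top_iff.mpr fun z _ => ?_⟩⟩
    obtain ⟨cz, hcz⟩ := hsA (Frob.toA z)
    have hz : z = ∑ y ∈ sA, cz y • (Frob.of y : Frob A p e) := hcz
    rw [hz]
    exact Submodule.sum_mem _ fun y hy =>
      Submodule.smul_mem _ _ (Submodule.subset_span (Finset.mem_image_of_mem _ hy))
  haveI : Module.Free A (Frob A p e) := Module.free_of_finite_type_torsion_free'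
  set b := Module.Free.chooseBasis A (Frob A p e) with hb
  -- a coordinate of f c which is a unit
  have hrep : ∃ i, b.repr (Frob.of (f c)) i ∉ IsLocalRing.maximalIdeal A := by
    by_contra hall
    push_neg at hall
    apply hN
    have hsum : (∑ i, b.repr (Frob.of (f c)) i ^ p ^ e * Frob.toA (b i)) = f c :=
      b.sum_repr (Frob.of (f c))
    rw [← hsum]
    refine Ideal.sum_mem _ fun i _ => ?_
    exact Ideal.mul_mem_right _ _
      ((Ideal.pow_le_pow_right hpe) (Ideal.pow_mem_pow (hall i) _))
  obtain ⟨i₀, hi₀⟩ := hrep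
  have hu : IsUnit (b.repr (Frob.of (f c)) i₀) := IsLocalRing.notMem_maximalIdeal.mp hi₀
  set u : Aˣ := hu.unit with hudef
  let Φfun : A → A := fun z => ↑u⁻¹ * b.repr (Frob.of z) i₀
  have Φadd : ∀ x y : A, Φfun (x + y) = Φfun x + Φfun y := by
    intro x y
    show ↑u⁻¹ * b.repr (Frob.of (x + y)) i₀ =
      ↑u⁻¹ * b.repr (Frob.of x) i₀ + ↑u⁻¹ * b.repr (Frob.of y) i₀
    have hxy : (Frob.of (x + y) : Frob A p e) = Frob.of x + Frob.of y := rfl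
    rw [hxy, map_add, Finsupp.add_apply, mul_add]
  let Φ : A →+ A := AddMonoidHom.mk' Φfun Φadd
  have hΦlin : ∀ a z : A, Φ (a ^ p ^ e * z) = a * Φ z := by
    intro a z
    show ↑u⁻¹ * b.repr (Frob.of (a ^ p ^ e * z)) i₀ = a * (↑u⁻¹ * b.repr (Frob.of z) i₀)
    have hsm : (Frob.of (a ^ p ^ e * z) : Frob A p e) = a • Frob.of z := rfl
    rw [hsm, map_smul]
    simp only [Finsupp.smul_apply, smul_eq_mul]
    ring
  have hΦc : Φ (f c) = 1 := by
    show ↑u⁻¹ * b.repr (Frob.of (f c)) i₀ = 1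
    rw [← hu.unit_spec]
    exact Units.inv_mul _
  -- clear denominators
  obtain ⟨sR, hsR⟩ := ffinite_pow hp hff e
  obtain ⟨u₀, hu₀⟩ := IsLocalization.exist_integer_multiples_of_finset 𝔭.primeCompl
    (sR.image fun y => Φ (f y))
  have hint : ∀ y : R, ∃ r : R, y ∈ sR → f r = f u₀ * Φ (f y) := by
    intro y
    by_cases hy : y ∈ sR
    · obtain ⟨r, hr⟩ := hu₀ _ (Finset.mem_image_of_mem _ hy)
      exact ⟨r, fun _ => by rw [hr, Algebra.smul_def]⟩
    · exact ⟨0, fun hy' => absurd hy' hy⟩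
  choose rY hrY using hint
  have key : ∀ x : R, ∃ r : R, f r = f u₀ * Φ (f x) := by
    intro x
    obtain ⟨cx, hcx⟩ := hsR x
    refine ⟨∑ y ∈ sR, cx y * rY y, ?_⟩
    have hfx : f x = ∑ y ∈ sR, f (cx y) ^ p ^ e * f y := by
      rw [hcx, map_sum]
      exact Finset.sum_congr rfl fun y hy => by rw [map_mul, map_pow]
    rw [map_sum, hfx, map_sum Φ, Finset.mul_sum]
    refine Finset.sum_congr rfl fun y hy => ?_
    rw [map_mul, hrY y hy, hΦlin]
    ring
  choose ψ hψ using key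
  have ψadd : ∀ x y : R, ψ (x + y) = ψ x + ψ y := by
    intro x y
    apply finj
    rw [map_add, hψ, hψ, hψ, map_add, map_add, mul_add]
  refine ⟨e, AddMonoidHom.mk' ψ ψadd, fun a x => ?_, ?_⟩
  · apply finj
    show f (ψ (a ^ p ^ e * x)) = f (a * ψ x)
    rw [hψ, map_mul, map_pow, hΦlin, map_mul, hψ]
    ring
  · have hψc : ψ c = ↑u₀ := by
      apply finj
      rw [hψ, hΦc, mul_one]
    show ψ c ∉ 𝔭
    rw [hψc]
    exact u₀.2

/-- If `(R, 𝔭)` is purely F-regular for a height-one prime `𝔭` of a noetherian F-finite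
normal domain, then both `R` and `R/𝔭` are strongly F-regular. -/
theorem stronglyFRegular_of_purelyFRegular (p : ℕ) (hp : p.Prime)
    (R : Type*) [CommRing R] [IsDomain R] [IsNoetherianRing R] [IsIntegrallyClosed R]
    [CharP R p] (hff : FFinite p R)
    (𝔭 : Ideal R) (h𝔭 : IsHeightOnePrime 𝔭)
    (h : PurelyFRegularAlong p 𝔭) :
    StronglyFRegular p R ∧ StronglyFRegular p (R ⧸ 𝔭) := by
  constructor
  · intro c hc
    obtain ⟨e₁, ψ, hψlin, hψc⟩ := exists_pLinear_escape hp hff 𝔭 h𝔭 c hc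
    obtain ⟨e₂, he₂, φ, hφlin, -, hφψc⟩ := h (ψ c) hψc
    refine ⟨e₁ + e₂, le_add_of_nonneg_of_le (Nat.zero_le _) he₂, φ.comp ψ, fun a x => ?_, ?_⟩
    · have : a ^ p ^ (e₁ + e₂) = (a ^ p ^ e₂) ^ p ^ e₁ := by
        rw [← pow_mul, ← pow_add, Nat.add_comm e₂ e₁]
      simp only [AddMonoidHom.comp_apply]
      rw [this, hψlin, hφlin]
    · simp only [AddMonoidHom.comp_apply]
      exact hφψc
  · intro cbar hcbar
    obtain ⟨cr, hcr⟩ := Ideal.Quotient.mk_surjective cbar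
    have hcr𝔭 : cr ∉ 𝔭 := fun hmem =>
      hcbar (hcr ▸ (Ideal.Quotient.eq_zero_iff_mem.mpr hmem))
    obtain ⟨e, he, φ, hφlin, hφ𝔭, hφc⟩ := h cr hcr𝔭
    classical
    let σ : R ⧸ 𝔭 → R := Function.surjInv Ideal.Quotient.mk_surjective
    have hσ : ∀ x : R ⧸ 𝔭, Ideal.Quotient.mk 𝔭 (σ x) = x :=
      fun x => Function.surjInv_eq Ideal.Quotient.mk_surjective x
    let g : R ⧸ 𝔭 → R ⧸ 𝔭 := fun x => Ideal.Quotient.mk 𝔭 (φ (σ x))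
    have hg : ∀ (x : R ⧸ 𝔭) (y : R), Ideal.Quotient.mk 𝔭 y = x →
        Ideal.Quotient.mk 𝔭 (φ y) = g x := by
      intro x y hy
      have hsub : y - σ x ∈ 𝔭 := by
        rw [← Ideal.Quotient.eq_zero_iff_mem, map_sub, hy, hσ, sub_self]
      have : φ y - φ (σ x) ∈ 𝔭 := by
        rw [← map_sub]; exact hφ𝔭 _ hsub
      have := Ideal.Quotient.eq_zero_iff_mem.mpr this
      rw [map_sub, sub_eq_zero] at this
      exact this
    have gadd : ∀ x y : R ⧸ 𝔭, g (x + y) = g x + g y := by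
      intro x y
      have hx := hσ x
      have hy := hσ y
      have hxy : Ideal.Quotient.mk 𝔭 (σ x + σ y) = x + y := by rw [map_add, hx, hy]
      rw [← hg (x + y) _ hxy, map_add, map_add, hg x _ hx, hg y _ hy]
    refine ⟨e, he, AddMonoidHom.mk' g gadd, fun a x => ?_, ?_⟩
    · show g (a ^ p ^ e * x) = a * g x
      obtain ⟨ar, har⟩ := Ideal.Quotient.mk_surjective a
      obtain ⟨xr, hxr⟩ := Ideal.Quotient.mk_surjective x
      have h1 : Ideal.Quotient.mk 𝔭 (ar ^ p ^ e * xr) = a ^ p ^ e * x := by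
        rw [map_mul, map_pow, har, hxr]
      rw [← hg _ _ h1, hφlin, map_mul, har, hg x _ hxr]
    · show g cbar = 1
      rw [← hg cbar cr hcr, hφc, map_one]
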